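/- If (G, W) is (λ, μ)-k-coalitionally smooth and a group best-response update is performed from state a by a coalition whose size ζ is drawn with probabilities p_1,...,p_k and whose membership is uniform among size-ζ subsets, then the expected welfare after the update satisfies E[W(a⁺) | a] ≥ (Σ_ζ p_ζ λ_ζ)·W(a°) − (Σ_ζ p_ζ μ_ζ)·W(a), where a° is a welfare-optimal joint action. -/

import Mathlib

open Finset

/-- In the joint action `a`, replace the actions of the agents in `Γ` by those from `a'`. -/
def deviate {n : ℕ} {A : Fin n → Type*} (a a' : ∀ i, A i) (Γ : Finset (Fin n)) :
    ∀ i, A i := fun i => if i ∈ Γ then a' i else a i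

/-- `a` is a k-strong Nash equilibrium of the common-interest game with welfare `W`:
no group of between 1 and k agents can deviate to strictly improve `W`. -/
def kSNE {n : ℕ} {A : Fin n → Type*} (W : (∀ i, A i) → ℝ) (k : ℕ) (a : ∀ i, A i) : Prop :=
  ∀ Γ : Finset (Fin n), 1 ≤ Γ.card → Γ.card ≤ k → ∀ a' : ∀ i, A i,
    W (deviate a a' Γ) ≤ W a

/-- (λ,μ)-k-coalitional smoothness. -/
def CoalSmooth {n : ℕ} {A : Fin n → Type*} (W : (∀ i, A i) → ℝ) (k : ℕ)
    (lam mu : ℕ → ℝ) : Prop :=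
  ∀ a a' : ∀ i, A i, ∀ ζ, 1 ≤ ζ → ζ ≤ k →
    lam ζ * W a' - mu ζ * W a ≤
      (1 / (n.choose ζ : ℝ)) *
        ∑ Γ ∈ Finset.powersetCard ζ (Finset.univ : Finset (Fin n)), W (deviate a a' Γ)

/-- in a (λ,μ)-k-coalitionally smooth game, if from state a a coalition
of size ζ (drawn with probability p_ζ, uniformly among size-ζ subsets) performs a
group best response b, the expected resulting welfare is at least
(Σ_ζ p_ζ λ_ζ)·W(a°) − (Σ_ζ p_ζ μ_ζ)·W(a), where a° maximizes W. -/
theorem stmt_11 {n k : ℕ} {A : Fin n → Type*} (hn : 1 ≤ n) (hk : k ≤ n)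
    (W : (∀ i, A i) → ℝ) (hW : ∀ a, 0 ≤ W a)
    (lam mu : ℕ → ℝ) (hlam : ∀ ζ, 0 ≤ lam ζ) (hmu : ∀ ζ, 0 ≤ mu ζ)
    (hsmooth : CoalSmooth W k lam mu)
    (p : ℕ → ℝ) (hp : ∀ ζ, 0 ≤ p ζ) (hp1 : ∑ ζ ∈ Finset.Icc 1 k, p ζ = 1)
    (a : ∀ i, A i) (b : Finset (Fin n) → ∀ i, A i)
    (hb : ∀ Γ : Finset (Fin n), ∀ a' : ∀ i, A i,
      W (deviate a a' Γ) ≤ W (deviate a (b Γ) Γ))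
    (aopt : ∀ i, A i) (hopt : ∀ a'', W a'' ≤ W aopt) :
    (∑ ζ ∈ Finset.Icc 1 k, p ζ * lam ζ) * W aopt
        - (∑ ζ ∈ Finset.Icc 1 k, p ζ * mu ζ) * W a
      ≤ ∑ ζ ∈ Finset.Icc 1 k, p ζ *
          ((1 / (n.choose ζ : ℝ)) *
            ∑ Γ ∈ Finset.powersetCard ζ (Finset.univ : Finset (Fin n)),
              W (deviate a (b Γ) Γ)) := by
  rw [Finset.sum_mul, Finset.sum_mul, ← Finset.sum_sub_distrib]
  refine Finset.sum_le_sum fun ζ hζ => ?_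
  obtain ⟨h1, h2⟩ := Finset.mem_Icc.mp hζ
  have key : lam ζ * W aopt - mu ζ * W a ≤
      (1 / (n.choose ζ : ℝ)) *
        ∑ Γ ∈ Finset.powersetCard ζ (Finset.univ : Finset (Fin n)),
          W (deviate a (b Γ) Γ) := by
    refine (hsmooth a aopt ζ h1 h2).trans ?_
    refine mul_le_mul_of_nonneg_left ?_ (by positivity)
    exact Finset.sum_le_sum fun Γ _ => hb Γ aopt
  calc p ζ * lam ζ * W aopt - p ζ * mu ζ * W a
      = p ζ * (lam ζ * W aopt - mu ζ * W a) := by ring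
    _ ≤ _ := mul_le_mul_of_nonneg_left key (hp ζ)
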